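/- Let u₀(y) = y log y + (1-y) log(1-y) on [0,1] and v(y) = max(0, y - 1/2). For t ∈ (0,1], define φ_t = (u₀ + t·v)* (Legendre transform). Then φ_t(x) = φ₀(x) for x ≤ 0, φ_t(x) = φ₀(0) + x/2 for x ∈ [0,t], and φ_t(x) = φ₀(x - t) + t/2 for x ≥ t, where φ₀(x) = log(1+e^x). -/

import Mathlib

/-- `u₀(y) = y log y + (1-y) log(1-y)` (with `0 log 0 = 0`, which is Mathlib's convention
for `Real.log`). -/
noncomputable def entropyU (y : ℝ) : ℝ := y * Real.log y + (1 - y) * Real.log (1 - y)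

/-- `v(y) = max(0, y - 1/2)`. -/
noncomputable def kinkV (y : ℝ) : ℝ := max 0 (y - 1/2)

/-- The Legendre transform `φ_t = (u₀ + t v)*` over the interval `[0,1]`. -/
noncomputable def geodesicPhi (t x : ℝ) : ℝ :=
  ⨆ y : Set.Icc (0:ℝ) 1, (x * (y : ℝ) - (entropyU y + t * kinkV y))

/-- Fenchel–Young: `x*y - u₀(y) ≤ log(1+eˣ)` for `y ∈ [0,1]`. -/
lemma fenchel (x : ℝ) {y : ℝ} (hy0 : 0 ≤ y) (hy1 : y ≤ 1) :
    x * y - entropyU y ≤ Real.log (1 + Real.exp x) := by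
  have hL : (0:ℝ) ≤ Real.log (1 + Real.exp x) :=
    Real.log_nonneg (by nlinarith [Real.exp_pos x])
  rcases eq_or_lt_of_le hy0 with h0 | h0
  · simp [entropyU, ← h0]; linarith
  rcases eq_or_lt_of_le hy1 with h1 | h1
  · subst h1
    simp only [entropyU]
    norm_num
    calc x = Real.log (Real.exp x) := (Real.log_exp x).symm
    _ ≤ Real.log (1 + Real.exp x) :=
      Real.log_le_log (Real.exp_pos x) (by linarith [Real.exp_pos x])
  · have h1y : 0 < 1 - y := by linarith
    have key := Real.geom_mean_le_arith_mean2_weighted (le_of_lt h0) (le_of_lt h1y)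
      (p₁ := Real.exp x / y) (p₂ := 1/(1-y)) (by positivity) (by positivity) (by ring)
    have hrhs : y * (Real.exp x / y) + (1 - y) * (1 / (1 - y)) = Real.exp x + 1 := by
      field_simp
    rw [hrhs] at key
    have hpos : (0:ℝ) < (Real.exp x / y) ^ y * (1/(1-y)) ^ (1-y) := by positivity
    have hlog := Real.log_le_log hpos key
    rw [Real.log_mul (by positivity) (by positivity),
        Real.log_rpow (by positivity), Real.log_rpow (by positivity),
        Real.log_div (Real.exp_ne_zero x) (ne_of_gt h0), Real.log_exp,
        Real.log_div one_ne_zero (ne_of_gt h1y), Real.log_one] at hlog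
    have : Real.exp x + 1 = 1 + Real.exp x := by ring
    rw [this] at hlog
    simp only [entropyU]
    nlinarith [hlog]

/-- Equality in Fenchel–Young at the sigmoid point. -/
lemma fenchel_eq (z : ℝ) :
    z * (Real.exp z / (1 + Real.exp z)) - entropyU (Real.exp z / (1 + Real.exp z))
      = Real.log (1 + Real.exp z) := by
  have he : (0:ℝ) < Real.exp z := Real.exp_pos z
  have hd : (0:ℝ) < 1 + Real.exp z := by linarith
  set s := Real.exp z / (1 + Real.exp z) with hs
  have h1s : 1 - s = 1 / (1 + Real.exp z) := by rw [hs]; field_simp; ring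
  have hlogs : Real.log s = z - Real.log (1 + Real.exp z) := by
    rw [hs, Real.log_div (Real.exp_ne_zero z) (ne_of_gt hd), Real.log_exp]
  have hlog1s : Real.log (1 - s) = -Real.log (1 + Real.exp z) := by
    rw [h1s, Real.log_div one_ne_zero (ne_of_gt hd), Real.log_one]; ring
  simp only [entropyU, hlogs, hlog1s]
  ring

lemma sigmoid_mem (z : ℝ) : Real.exp z / (1 + Real.exp z) ∈ Set.Icc (0:ℝ) 1 := by
  have he : (0:ℝ) < Real.exp z := Real.exp_pos z
  constructor
  · positivity
  · rw [div_le_one (by linarith)]; linarith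

lemma sup_eq {f : Set.Icc (0:ℝ) 1 → ℝ} {M : ℝ} (hub : ∀ y, f y ≤ M)
    (y₀ : Set.Icc (0:ℝ) 1) (h : f y₀ = M) : (⨆ y, f y) = M := by
  haveI : Nonempty (Set.Icc (0:ℝ) 1) := ⟨⟨0, by norm_num⟩⟩
  refine le_antisymm (ciSup_le hub) ?_
  calc M = f y₀ := h.symm
  _ ≤ ⨆ y, f y := le_ciSup ⟨M, by rintro _ ⟨y, rfl⟩; exact hub y⟩ y₀

lemma sigmoid_le_half {z : ℝ} (hz : z ≤ 0) : Real.exp z / (1 + Real.exp z) ≤ 1/2 := by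
  have he : (0:ℝ) < Real.exp z := Real.exp_pos z
  have h1 : Real.exp z ≤ 1 := Real.exp_le_one_iff.mpr hz
  rw [div_le_iff₀ (by linarith)]; linarith

lemma half_le_sigmoid {z : ℝ} (hz : 0 ≤ z) : 1/2 ≤ Real.exp z / (1 + Real.exp z) := by
  have he : (0:ℝ) < Real.exp z := Real.exp_pos z
  have h1 : 1 ≤ Real.exp z := Real.one_le_exp hz
  rw [le_div_iff₀ (by linarith)]; linarith

/-- Explicit description of the geodesic `φ_t = (u₀ + t v)*` for `t ∈ (0,1]`:
it equals `φ₀(x) = log(1+eˣ)` for `x ≤ 0`, is affine with slope `1/2` on `[0,t]`,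
and equals `φ₀(x-t) + t/2` for `x ≥ t`. -/
theorem geodesicPhi_explicit (t : ℝ) (ht : t ∈ Set.Ioc (0:ℝ) 1) :
    (∀ x ≤ (0:ℝ), geodesicPhi t x = Real.log (1 + Real.exp x)) ∧
    (∀ x ∈ Set.Icc (0:ℝ) t, geodesicPhi t x = Real.log (1 + Real.exp 0) + x / 2) ∧
    (∀ x ≥ t, geodesicPhi t x = Real.log (1 + Real.exp (x - t)) + t / 2) := by
  obtain ⟨ht0, ht1⟩ := ht
  have hU2 : entropyU (1/2) = -Real.log 2 := by
    simp only [entropyU]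
    rw [show (1:ℝ) - 1/2 = 1/2 by norm_num, one_div, Real.log_inv]
    ring
  have hlog2 : Real.log (1 + Real.exp 0) = Real.log 2 := by
    rw [Real.exp_zero]; norm_num
  refine ⟨?_, ?_, ?_⟩
  · -- x ≤ 0
    intro x hx
    refine sup_eq ?_ ⟨Real.exp x / (1 + Real.exp x), sigmoid_mem x⟩ ?_
    · rintro ⟨y, hy0, hy1⟩
      have hf := fenchel x hy0 hy1
      have hv : 0 ≤ kinkV y := le_max_left _ _
      simp only
      nlinarith
    · simp only
      have hk : kinkV (Real.exp x / (1 + Real.exp x)) = 0 :=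
        max_eq_left (by linarith [sigmoid_le_half hx])
      rw [hk]
      have := fenchel_eq x
      linarith
  · -- 0 ≤ x ≤ t
    rintro x ⟨hx0, hxt⟩
    refine sup_eq ?_ ⟨1/2, by norm_num⟩ ?_
    · rintro ⟨y, hy0, hy1⟩
      have hU : -entropyU y ≤ Real.log 2 := by
        have := fenchel 0 hy0 hy1
        rw [Real.exp_zero] at this; norm_num at this; linarith
      simp only
      rw [hlog2]
      rcases le_total y (1/2) with h | h
      · have hk : kinkV y = 0 := max_eq_left (by linarith)
        rw [hk]
        nlinarith
      · have hk : kinkV y = y - 1/2 := max_eq_right (by linarith)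
        rw [hk]
        nlinarith [mul_nonpos_of_nonpos_of_nonneg (show x - t ≤ 0 by linarith)
          (show (0:ℝ) ≤ y - 1/2 by linarith)]
    · simp only
      have hk : kinkV (1/2) = 0 := max_eq_left (by norm_num)
      rw [hk, hU2, hlog2]
      ring
  · -- x ≥ t
    intro x hx
    have hxt : 0 ≤ x - t := by linarith
    refine sup_eq ?_ ⟨Real.exp (x-t) / (1 + Real.exp (x-t)), sigmoid_mem (x-t)⟩ ?_
    · rintro ⟨y, hy0, hy1⟩
      have hf := fenchel (x - t) hy0 hy1
      simp only
      rcases le_total y (1/2) with h | h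
      · have hk : kinkV y = 0 := max_eq_left (by linarith)
        rw [hk]
        nlinarith
      · have hk : kinkV y = y - 1/2 := max_eq_right (by linarith)
        rw [hk]
        nlinarith
    · simp only
      have hk : kinkV (Real.exp (x-t) / (1 + Real.exp (x-t)))
          = Real.exp (x-t) / (1 + Real.exp (x-t)) - 1/2 :=
        max_eq_right (by linarith [half_le_sigmoid hxt])
      rw [hk]
      have := fenchel_eq (x - t)
      nlinarith
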